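/- Let A, A', B be commutative rings, π : A' → A a surjective ring homomorphism, q : B → A a ring homomorphism, and let B' = A' ×_A B = {(a', b) ∈ A' × B : π(a') = q(b)} be the pullback ring. Let P' be a finitely generated projective A'-module, P'' a finitely generated projective B-module, and φ : A ⊗_{A'} P' → A ⊗_B P'' an isomorphism of A-modules. Define P''' = {(x, y) ∈ P' × P'' : φ(1 ⊗ x) = 1 ⊗ y}, a module over B' via the coordinatewise action. Then P''' is a finitely generated projective B'-module, and the natural maps A' ⊗_{B'} P''' → P' and B ⊗_{B'} P''' → P'' (induced by the two coordinate projections) are isomorphisms; moreover the two induced isomorphisms A ⊗_{B'} P''' → A ⊗_{A'} P' and A ⊗_{B'} P''' → A ⊗_B P'' are compatible with φ. -/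

import Mathlib

/-!
STATEMENT 4: gluing finitely generated projective modules over a pullback ring
`B' = A' ×_A B` (with `A' → A` surjective): given `P'` over `A'`, `P''` over `B`
and an isomorphism `φ : A ⊗_{A'} P' ≅ A ⊗_B P''`, the fibre product
`P''' = {(x, y) | φ(1 ⊗ x) = 1 ⊗ y}` is a finitely generated projective
`B'`-module whose base changes to `A'` and `B` recover `P'` and `P''`,
compatibly with `φ`.
-/

set_option synthInstance.maxHeartbeats 1000000
set_option maxHeartbeats 1000000
set_option maxRecDepth 100000

open TensorProduct




section

variable (A A' B : Type*) [CommRing A] [CommRing A'] [CommRing B]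
  [Algebra A' A] [Algebra B A]

/-- The pullback ring `B' = A' ×_A B`, i.e. the subring of `A' × B` consisting
of the pairs `(a', b)` with `π(a') = q(b)`, where `π : A' → A` and `q : B → A`
are the structure maps. -/
def pullbackRing : Subring (A' × B) :=
  RingHom.eqLocus ((algebraMap A' A).comp (RingHom.fst A' B))
    ((algebraMap B A).comp (RingHom.snd A' B))

instance : Algebra (pullbackRing A A' B) A' :=
  ((RingHom.fst A' B).comp (pullbackRing A A' B).subtype).toAlgebra

instance : Algebra (pullbackRing A A' B) B :=
  ((RingHom.snd A' B).comp (pullbackRing A A' B).subtype).toAlgebra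

variable (P' P'' : Type*) [AddCommGroup P'] [Module A' P']
  [AddCommGroup P''] [Module B P'']

/-- `B'` acts on `P'` through the first coordinate projection `B' → A'`. -/
instance : Module (pullbackRing A A' B) P' :=
  Module.compHom P' (algebraMap (pullbackRing A A' B) A')

/-- `B'` acts on `P''` through the second coordinate projection `B' → B`. -/
instance : Module (pullbackRing A A' B) P'' :=
  Module.compHom P'' (algebraMap (pullbackRing A A' B) B)

instance : IsScalarTower (pullbackRing A A' B) A' P' :=
  IsScalarTower.of_algebraMap_smul fun _ _ => rfl

instance : IsScalarTower (pullbackRing A A' B) B P'' :=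
  IsScalarTower.of_algebraMap_smul fun _ _ => rfl

theorem one_tmul_smul_left (a' : A') (x : P') :
    (1 : A) ⊗ₜ[A'] (a' • x) = (algebraMap A' A a') • ((1 : A) ⊗ₜ[A'] x) := by
  rw [← smul_tmul, ← algebraMap_smul A a' (1 : A), smul_tmul']

theorem one_tmul_smul_right (b : B) (y : P'') :
    (1 : A) ⊗ₜ[B] (b • y) = (algebraMap B A b) • ((1 : A) ⊗ₜ[B] y) := by
  rw [← smul_tmul, ← algebraMap_smul A b (1 : A), smul_tmul']

variable (φ : (A ⊗[A'] P') ≃ₗ[A] (A ⊗[B] P''))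

/-- The fibre product `P''' = {(x, y) ∈ P' × P'' | φ(1 ⊗ x) = 1 ⊗ y}`, as a
`B'`-submodule of `P' × P''` with the coordinatewise action
`(a', b) • (x, y) = (a' • x, b • y)`. -/
def pullbackModule : Submodule (pullbackRing A A' B) (P' × P'') where
  carrier := {p | φ ((1 : A) ⊗ₜ[A'] p.1) = (1 : A) ⊗ₜ[B] p.2}
  add_mem' := by
    intro p q hp hq
    simp only [Set.mem_setOf_eq] at *
    rw [Prod.fst_add, Prod.snd_add, TensorProduct.tmul_add, map_add, hp, hq,
      TensorProduct.tmul_add]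
  zero_mem' := by simp
  smul_mem' := by
    intro c p hp
    simp only [Set.mem_setOf_eq] at *
    have hc : algebraMap A' A (c : A' × B).1 = algebraMap B A (c : A' × B).2 := c.2
    show φ ((1 : A) ⊗ₜ[A'] ((c : A' × B).1 • p.1)) = (1 : A) ⊗ₜ[B] ((c : A' × B).2 • p.2)
    rw [one_tmul_smul_left, map_smul, hp, hc, ← one_tmul_smul_right]

/-- The natural `A'`-linear map `A' ⊗[B'] P''' → P'`, `a' ⊗ (x, y) ↦ a' • x`,
induced by the first coordinate projection. -/
noncomputable def toLeft :
    (A' ⊗[pullbackRing A A' B] (pullbackModule A A' B P' P'' φ)) →ₗ[A'] P' :=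
  LinearMap.liftBaseChange A'
    ((LinearMap.fst (pullbackRing A A' B) P' P'').comp
      (pullbackModule A A' B P' P'' φ).subtype)

/-- The natural `B`-linear map `B ⊗[B'] P''' → P''`, `b ⊗ (x, y) ↦ b • y`,
induced by the second coordinate projection. -/
noncomputable def toRight :
    (B ⊗[pullbackRing A A' B] (pullbackModule A A' B P' P'' φ)) →ₗ[B] P'' :=
  LinearMap.liftBaseChange B
    ((LinearMap.snd (pullbackRing A A' B) P' P'').comp
      (pullbackModule A A' B P' P'' φ).subtype)

section Helpers

variable {S T : Type*} [CommRing S] [CommRing T] [Algebra S T]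
variable {M N M₂ : Type*} [AddCommGroup M] [Module S M] [AddCommGroup N] [Module S N]
  [AddCommGroup M₂] [Module T M₂]

theorem LinearMap.ext_tensor {f g : T ⊗[S] M →ₗ[T] M₂}
    (h : ∀ (t : T) (m : M), f (t ⊗ₜ m) = g (t ⊗ₜ m)) : f = g := by
  apply LinearMap.ext
  intro x
  induction x using TensorProduct.induction_on with
  | zero => simp
  | tmul t m => exact h t m
  | add x y hx hy => rw [map_add, map_add, hx, hy]

variable (S T M N)

/-- Base change commutes with binary products (tower version). -/
noncomputable def prodBaseChange : (T ⊗[S] (M × N)) ≃ₗ[T] (T ⊗[S] M) × (T ⊗[S] N) :=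
  LinearEquiv.ofLinear
    (LinearMap.prod ((LinearMap.fst S M N).baseChange T) ((LinearMap.snd S M N).baseChange T))
    (((LinearMap.inl S M N).baseChange T).coprod ((LinearMap.inr S M N).baseChange T))
    (by ext <;> simp)
    (by
      apply LinearMap.ext_tensor
      intro t m
      simp only [LinearMap.comp_apply, LinearMap.prod_apply, Pi.prod,
        LinearMap.baseChange_tmul, LinearMap.fst_apply, LinearMap.snd_apply,
        LinearMap.coprod_apply, LinearMap.inl_apply, LinearMap.inr_apply, LinearMap.id_apply,
        ← TensorProduct.tmul_add]
      simp
      rw [← TensorProduct.tmul_add, Prod.mk_add_mk, add_zero, zero_add])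

@[simp] lemma prodBaseChange_tmul (t : T) (m : M) (n : N) :
    prodBaseChange S T M N (t ⊗ₜ (m, n)) = (t ⊗ₜ m, t ⊗ₜ n) := rfl

@[simp] lemma prodBaseChange_tmul' (t : T) (p : M × N) :
    prodBaseChange S T M N (t ⊗ₜ p) = (t ⊗ₜ p.1, t ⊗ₜ p.2) := rfl

lemma prodBaseChange_symm_apply (u : T ⊗[S] M) (v : T ⊗[S] N) :
    (prodBaseChange S T M N).symm (u, v) =
      (LinearMap.inl S M N).baseChange T u + (LinearMap.inr S M N).baseChange T v := rfl

theorem Function.Bijective.of_prodMap {α β γ δ : Type*} {f : α → γ} {g : β → δ}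
    (h : Function.Bijective (Prod.map f g)) (a₀ : α) (b₀ : β) :
    Function.Bijective f ∧ Function.Bijective g := by
  refine ⟨⟨?_, ?_⟩, ⟨?_, ?_⟩⟩
  · intro x x' hx
    have := h.1 (a₁ := (x, b₀)) (a₂ := (x', b₀)) (by simp [Prod.map, hx])
    exact congrArg Prod.fst this
  · intro y
    obtain ⟨⟨x, b⟩, hxb⟩ := h.2 (y, g b₀)
    exact ⟨x, congrArg Prod.fst hxb⟩
  · intro x x' hx
    have := h.1 (a₁ := (a₀, x)) (a₂ := (a₀, x')) (by simp [Prod.map, hx])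
    exact congrArg Prod.snd this
  · intro y
    obtain ⟨⟨a, x⟩, hxb⟩ := h.2 (f a₀, y)
    exact ⟨x, congrArg Prod.snd hxb⟩

variable {S T M N}

/-- Elementary "shear" automorphism `(x, y) ↦ (x + G y, y)` of `M × N`. -/
def shearUp (G : N →ₗ[S] M) : (M × N) ≃ₗ[S] (M × N) where
  toFun p := (p.1 + G p.2, p.2)
  invFun p := (p.1 - G p.2, p.2)
  map_add' p q := by simp [Prod.ext_iff]; abel
  map_smul' c p := by simp [Prod.ext_iff, Prod.smul_def, smul_add]
  left_inv p := by simp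
  right_inv p := by simp

/-- Elementary "shear" automorphism `(x, y) ↦ (x, y + G x)` of `M × N`. -/
def shearDown (G : M →ₗ[S] N) : (M × N) ≃ₗ[S] (M × N) where
  toFun p := (p.1, p.2 + G p.1)
  invFun p := (p.1, p.2 - G p.1)
  map_add' p q := by simp [Prod.ext_iff]; abel
  map_smul' c p := by simp [Prod.ext_iff, Prod.smul_def, smul_add]
  left_inv p := by simp
  right_inv p := by simp

@[simp] lemma shearUp_apply (G : N →ₗ[S] M) (p : M × N) :
    shearUp G p = (p.1 + G p.2, p.2) := rfl
@[simp] lemma shearDown_apply (G : M →ₗ[S] N) (p : M × N) :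
    shearDown G p = (p.1, p.2 + G p.1) := rfl

/-- A f.g. projective module has a complement making it free. -/
theorem exists_complement (M : Type*) [AddCommGroup M] [Module S M]
    [Module.Finite S M] [Module.Projective S M] :
    ∃ (n : ℕ) (Q : Submodule S (Fin n → S)), Nonempty ((M × Q) ≃ₗ[S] (Fin n → S)) := by
  obtain ⟨n, f, hf⟩ := Module.Finite.exists_fin' S M
  obtain ⟨s, hs⟩ := Module.projective_lifting_property f LinearMap.id hf
  have hfs : ∀ m, f (s m) = m := fun m => LinearMap.congr_fun hs m
  refine ⟨n, LinearMap.ker f, ⟨?_⟩⟩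
  exact
    { toFun := fun p => s p.1 + (p.2 : Fin n → S)
      invFun := fun x => (f x, ⟨x - s (f x), by simp [LinearMap.mem_ker, hfs]⟩)
      map_add' := fun p q => by simp [map_add]; abel
      map_smul' := fun c p => by simp [map_smul, smul_add]
      left_inv := fun p => by
        have h2 : f (p.2 : Fin n → S) = 0 := p.2.2
        ext
        · simp [hfs, h2]
        · simp [hfs, h2]
      right_inv := fun x => by simp [hfs] }

variable {ι : Type*}

/-- The coordinates of `m` w.r.t. a basis, pushed into the algebra `T`. -/
noncomputable def basisCoords (b : Module.Basis ι S M) : M →ₗ[S] (ι → T) where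
  toFun m i := algebraMap S T (b.repr m i)
  map_add' u v := by funext i; simp
  map_smul' c u := by
    funext i
    simp [Algebra.smul_def]

lemma basisCoords_apply (b : Module.Basis ι S M) (m : M) (i : ι) :
    (basisCoords (T := T) b) m i = algebraMap S T (b.repr m i) := rfl

lemma basisCoords_basis [DecidableEq ι] (b : Module.Basis ι S M) (i : ι) :
    (basisCoords (T := T) b) (b i) = Pi.single i 1 := by
  funext j
  simp [basisCoords_apply, Module.Basis.repr_self, Finsupp.single_apply, Pi.single_apply, eq_comm]

lemma equivFun_baseChange_one_tmul [Fintype ι] (b : Module.Basis ι S M) (m : M) :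
    (b.baseChange T).equivFun ((1 : T) ⊗ₜ[S] m) = basisCoords (T := T) b m := by
  funext i
  rw [Module.Basis.equivFun_apply]
  simp [Module.Basis.baseChange_repr_tmul, basisCoords_apply, Algebra.smul_def]

lemma equivFun_baseChange_symm_coords [Fintype ι] (b : Module.Basis ι S M) (m : M) :
    (b.baseChange T).equivFun.symm (basisCoords (T := T) b m) = (1 : T) ⊗ₜ[S] m := by
  rw [← equivFun_baseChange_one_tmul, LinearEquiv.symm_apply_apply]

/-- Any `T`-endomorphism of `ι → T` lifts through `basisCoords` along a surjective
`algebraMap S T`. -/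
theorem exists_basisCoords_lift [Fintype ι] [DecidableEq ι]
    (hsurj : Function.Surjective (algebraMap S T)) (b : Module.Basis ι S M)
    (g : (ι → T) →ₗ[T] (ι → T)) :
    ∃ G : M →ₗ[S] M, ∀ m, basisCoords (T := T) b (G m) = g (basisCoords (T := T) b m) := by
  classical
  set G := b.constr ℕ (fun i => ∑ j, Function.surjInv hsurj (g (Pi.single i 1) j) • b j) with hG
  refine ⟨G, ?_⟩
  have hb : ∀ i, basisCoords (T := T) b (G (b i)) = g (basisCoords (T := T) b (b i)) := by
    intro i
    rw [hG, Module.Basis.constr_basis, basisCoords_basis]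
    funext j
    rw [basisCoords_apply, Module.Basis.repr_sum_self]
    exact Function.surjInv_eq hsurj _
  intro m
  conv_lhs => rw [← b.sum_repr m, map_sum, map_sum]
  conv_rhs => rw [← b.sum_repr m, map_sum, map_sum]
  refine Finset.sum_congr rfl fun i _ => ?_
  rw [map_smul, map_smul, hb, map_smul, g.map_smul_of_tower]

/-- The diagonal automorphism `diag (α⁻¹, α)` of `(ι → T)²` lifts to an `S`-linear
automorphism of `M × M` when `algebraMap S T` is surjective. -/
theorem exists_diag_lift [Fintype ι] [DecidableEq ι]
    (hsurj : Function.Surjective (algebraMap S T)) (b : Module.Basis ι S M)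
    (α : (ι → T) ≃ₗ[T] (ι → T)) :
    ∃ L : (M × M) ≃ₗ[S] (M × M), ∀ X : M × M,
      basisCoords (T := T) b (L X).1 = α.symm (basisCoords (T := T) b X.1) ∧
      basisCoords (T := T) b (L X).2 = α (basisCoords (T := T) b X.2) := by
  obtain ⟨G₁, hG₁⟩ := exists_basisCoords_lift hsurj b (α.symm : (ι → T) ≃ₗ[T] (ι → T)).toLinearMap
  obtain ⟨G₂, hG₂⟩ := exists_basisCoords_lift hsurj b (-(α.toLinearMap))
  have hg₁ : ∀ m, basisCoords (T := T) b (G₁ m) = α.symm (basisCoords (T := T) b m) :=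
    fun m => hG₁ m
  have hg₂ : ∀ m, basisCoords (T := T) b (G₂ m) = -(α (basisCoords (T := T) b m)) := by
    intro m
    rw [hG₂ m]
    simp
  let Wneg : (M × M) ≃ₗ[S] (M × M) :=
    (LinearEquiv.prodComm S M M).trans ((LinearEquiv.refl S M).prodCongr (LinearEquiv.neg S))
  refine ⟨(((Wneg.trans (shearUp G₁)).trans (shearDown G₂)).trans (shearUp G₁)).trans
      (LinearEquiv.neg S), fun X => ?_⟩
  obtain ⟨x₁, x₂⟩ := X
  constructor
  · show basisCoords (T := T) b
        (-((x₂ + G₁ (-x₁)) + G₁ (-x₁ + G₂ (x₂ + G₁ (-x₁))))) = α.symm (basisCoords (T := T) b x₁)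
    simp only [map_neg, map_add, hg₁, hg₂, LinearEquiv.apply_symm_apply,
      LinearEquiv.symm_apply_apply, neg_add_rev, neg_neg]
    abel
  · show basisCoords (T := T) b
        (-(-x₁ + G₂ (x₂ + G₁ (-x₁)))) = α (basisCoords (T := T) b x₂)
    simp only [map_neg, map_add, hg₁, hg₂, LinearEquiv.apply_symm_apply,
      LinearEquiv.symm_apply_apply, neg_add_rev, neg_neg]
    abel

lemma basisCoords_prod {N : Type*} [AddCommGroup N] [Module S N] {κ : Type*}
    (b : Module.Basis ι S M) (b' : Module.Basis κ S N) (X : M × N) :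
    basisCoords (T := T) (b.prod b') X =
      Sum.elim (basisCoords (T := T) b X.1) (basisCoords (T := T) b' X.2) := by
  funext k
  cases k with
  | inl i => simp [basisCoords_apply, Module.Basis.prod_repr_inl]
  | inr j => simp [basisCoords_apply, Module.Basis.prod_repr_inr]

lemma prod_equivFun_pbc_symm {N : Type*} [AddCommGroup N] [Module S N] {κ : Type*}
    [Fintype ι] [Fintype κ]
    (b : Module.Basis ι S M) (b' : Module.Basis κ S N) (w : T ⊗[S] M) (w' : T ⊗[S] N) :
    ((b.prod b').baseChange T).equivFun ((prodBaseChange S T M N).symm (w, w')) =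
      Sum.elim ((b.baseChange T).equivFun w) ((b'.baseChange T).equivFun w') := by
  have h1 : ∀ w : T ⊗[S] M, ((b.prod b').baseChange T).equivFun
      ((LinearMap.inl S M N).baseChange T w) =
      Sum.elim ((b.baseChange T).equivFun w) (0 : κ → T) := by
    intro w
    induction w using TensorProduct.induction_on with
    | zero =>
      rw [map_zero, map_zero]
      funext k
      cases k <;> simp
    | tmul a x =>
      rw [LinearMap.baseChange_tmul]
      funext k
      cases k with
      | inl i =>
        rw [Module.Basis.equivFun_apply, Module.Basis.baseChange_repr_tmul]
        simp [Module.Basis.prod_repr_inl, Module.Basis.equivFun_apply, Module.Basis.baseChange_repr_tmul]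
      | inr j =>
        rw [Module.Basis.equivFun_apply, Module.Basis.baseChange_repr_tmul]
        simp [Module.Basis.prod_repr_inr]
    | add x y hx hy =>
      rw [map_add, map_add, map_add]
      funext k
      rw [hx, hy]
      cases k <;> simp
  have h2 : ∀ w' : T ⊗[S] N, ((b.prod b').baseChange T).equivFun
      ((LinearMap.inr S M N).baseChange T w') =
      Sum.elim (0 : ι → T) ((b'.baseChange T).equivFun w') := by
    intro w
    induction w using TensorProduct.induction_on with
    | zero =>
      rw [map_zero, map_zero]
      funext k
      cases k <;> simp
    | tmul a x =>
      rw [LinearMap.baseChange_tmul]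
      funext k
      cases k with
      | inl i =>
        rw [Module.Basis.equivFun_apply, Module.Basis.baseChange_repr_tmul]
        simp [Module.Basis.prod_repr_inl]
      | inr j =>
        rw [Module.Basis.equivFun_apply, Module.Basis.baseChange_repr_tmul]
        simp [Module.Basis.prod_repr_inr, Module.Basis.equivFun_apply, Module.Basis.baseChange_repr_tmul]
    | add x y hx hy =>
      rw [map_add, map_add, map_add]
      funext k
      rw [hx, hy]
      cases k <;> simp
  rw [prodBaseChange_symm_apply, map_add, h1, h2]
  funext k
  cases k <;> simp

end Helpers

section Statement4Aux

variable {V W V₂ W₂ : Type*}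
  [AddCommGroup V] [Module A' V] [AddCommGroup W] [Module B W]
  [AddCommGroup V₂] [Module A' V₂] [AddCommGroup W₂] [Module B W₂]

/-- The four main conclusions, as a predicate on gluing data. -/
def Good (χ : (A ⊗[A'] V) ≃ₗ[A] (A ⊗[B] W)) : Prop :=
  Module.Finite (pullbackRing A A' B) (pullbackModule A A' B V W χ) ∧
  Module.Projective (pullbackRing A A' B) (pullbackModule A A' B V W χ) ∧
  Function.Bijective (toLeft A A' B V W χ) ∧
  Function.Bijective (toRight A A' B V W χ)

variable {A A' B}

theorem mem_pullback {χ : (A ⊗[A'] V) ≃ₗ[A] (A ⊗[B] W)} {p : V × W} :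
    p ∈ pullbackModule A A' B V W χ ↔ χ ((1:A) ⊗ₜ[A'] p.1) = (1:A) ⊗ₜ[B] p.2 := Iff.rfl

theorem toLeft_tmul (χ : (A ⊗[A'] V) ≃ₗ[A] (A ⊗[B] W)) (a : A')
    (p : pullbackModule A A' B V W χ) :
    toLeft A A' B V W χ (a ⊗ₜ p) = a • (p : V × W).1 := rfl

theorem toRight_tmul (χ : (A ⊗[A'] V) ≃ₗ[A] (A ⊗[B] W)) (b : B)
    (p : pullbackModule A A' B V W χ) :
    toRight A A' B V W χ (b ⊗ₜ p) = b • (p : V × W).2 := rfl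

variable (A A' B)

/-- Direct sum of two gluing isomorphisms. -/
noncomputable def glueProd (χ : (A ⊗[A'] V) ≃ₗ[A] (A ⊗[B] W))
    (χ₂ : (A ⊗[A'] V₂) ≃ₗ[A] (A ⊗[B] W₂)) :
    (A ⊗[A'] (V × V₂)) ≃ₗ[A] (A ⊗[B] (W × W₂)) :=
  prodBaseChange A' A V V₂ ≪≫ₗ χ.prodCongr χ₂ ≪≫ₗ (prodBaseChange B A W W₂).symm

variable {A A' B}

theorem glueProd_one_tmul (χ : (A ⊗[A'] V) ≃ₗ[A] (A ⊗[B] W))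
    (χ₂ : (A ⊗[A'] V₂) ≃ₗ[A] (A ⊗[B] W₂)) (v : V) (v₂ : V₂) :
    glueProd A A' B χ χ₂ ((1:A) ⊗ₜ[A'] (v, v₂)) =
      (prodBaseChange B A W W₂).symm (χ ((1:A) ⊗ₜ[A'] v), χ₂ ((1:A) ⊗ₜ[A'] v₂)) := by
  simp [glueProd]

theorem mem_glueProd_iff {χ : (A ⊗[A'] V) ≃ₗ[A] (A ⊗[B] W)}
    {χ₂ : (A ⊗[A'] V₂) ≃ₗ[A] (A ⊗[B] W₂)} {p : (V × V₂) × (W × W₂)} :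
    p ∈ pullbackModule A A' B (V × V₂) (W × W₂) (glueProd A A' B χ χ₂) ↔
      ((p.1.1, p.2.1) ∈ pullbackModule A A' B V W χ ∧
       (p.1.2, p.2.2) ∈ pullbackModule A A' B V₂ W₂ χ₂) := by
  obtain ⟨⟨x₁, x₂⟩, ⟨y₁, y₂⟩⟩ := p
  have h2 : (1:A) ⊗ₜ[B] ((y₁, y₂) : W × W₂) =
      (prodBaseChange B A W W₂).symm ((1:A) ⊗ₜ[B] y₁, (1:A) ⊗ₜ[B] y₂) := by
    rw [LinearEquiv.eq_symm_apply]
    rfl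
  rw [mem_pullback]
  show glueProd A A' B χ χ₂ ((1:A) ⊗ₜ[A'] (x₁, x₂)) = (1:A) ⊗ₜ[B] ((y₁, y₂) : W × W₂) ↔ _
  rw [glueProd_one_tmul, h2, (prodBaseChange B A W W₂).symm.injective.eq_iff, Prod.ext_iff]
  exact Iff.rfl

/-- Splitting of the glued module of a direct sum. -/
noncomputable def prodSplit (χ : (A ⊗[A'] V) ≃ₗ[A] (A ⊗[B] W))
    (χ₂ : (A ⊗[A'] V₂) ≃ₗ[A] (A ⊗[B] W₂)) :
    (pullbackModule A A' B (V × V₂) (W × W₂) (glueProd A A' B χ χ₂))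
      ≃ₗ[pullbackRing A A' B]
    ((pullbackModule A A' B V W χ) × (pullbackModule A A' B V₂ W₂ χ₂)) where
  toFun p := (⟨((p : (V × V₂) × (W × W₂)).1.1, (p : (V × V₂) × (W × W₂)).2.1),
                (mem_glueProd_iff.mp p.2).1⟩,
              ⟨((p : (V × V₂) × (W × W₂)).1.2, (p : (V × V₂) × (W × W₂)).2.2),
                (mem_glueProd_iff.mp p.2).2⟩)
  invFun q := ⟨(((q.1 : V × W).1, (q.2 : V₂ × W₂).1), ((q.1 : V × W).2, (q.2 : V₂ × W₂).2)),
    mem_glueProd_iff.mpr ⟨q.1.2, q.2.2⟩⟩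
  map_add' p q := rfl
  map_smul' c p := rfl
  left_inv p := rfl
  right_inv q := rfl

/-- A direct summand of good gluing data is good. -/
theorem good_prod_left {χ : (A ⊗[A'] V) ≃ₗ[A] (A ⊗[B] W)}
    {χ₂ : (A ⊗[A'] V₂) ≃ₗ[A] (A ⊗[B] W₂)}
    (h : Good A A' B (glueProd A A' B χ χ₂)) : Good A A' B χ := by
  obtain ⟨hfin, hproj, hleft, hright⟩ := h
  set R' := pullbackRing A A' B
  set Mg := pullbackModule A A' B (V × V₂) (W × W₂) (glueProd A A' B χ χ₂)
  set M₁ := pullbackModule A A' B V W χ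
  set M₂ := pullbackModule A A' B V₂ W₂ χ₂
  letI : Module.Finite R' Mg := hfin
  letI : Module.Projective R' Mg := hproj
  let E := prodSplit χ χ₂
  refine ⟨?_, ?_, ?_, ?_⟩
  · exact Module.Finite.of_surjective
      ((LinearMap.fst R' M₁ M₂).comp E.toLinearMap)
      (fun q => ⟨E.symm (q, 0), by simp⟩)
  · exact Module.Projective.of_split
      (E.symm.toLinearMap.comp (LinearMap.inl R' M₁ M₂))
      ((LinearMap.fst R' M₁ M₂).comp E.toLinearMap)
      (by apply LinearMap.ext; intro q; simp; rfl)
  · have hsq : toLeft A A' B (V × V₂) (W × W₂) (glueProd A A' B χ χ₂) =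
        ((toLeft A A' B V W χ).prodMap (toLeft A A' B V₂ W₂ χ₂)).comp
          ((LinearEquiv.baseChange R' A' _ _ E).trans
            (prodBaseChange R' A' M₁ M₂)).toLinearMap := by
      apply LinearMap.ext_tensor
      intro a p
      simp only [LinearMap.comp_apply, LinearEquiv.coe_coe, LinearEquiv.trans_apply,
        LinearEquiv.baseChange, TensorProduct.AlgebraTensorModule.congr_tmul,
        LinearEquiv.refl_apply, prodBaseChange_tmul', LinearMap.prodMap_apply, toLeft_tmul]
      rfl
    have hb : Function.Bijective
        (((toLeft A A' B V W χ).prodMap (toLeft A A' B V₂ W₂ χ₂)) ∘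
          ((LinearEquiv.baseChange R' A' _ _ E).trans (prodBaseChange R' A' M₁ M₂))) := by
      rw [show ((toLeft A A' B V W χ).prodMap (toLeft A A' B V₂ W₂ χ₂)) ∘
          ⇑((LinearEquiv.baseChange R' A' _ _ E).trans (prodBaseChange R' A' M₁ M₂)) =
          ⇑(toLeft A A' B (V × V₂) (W × W₂) (glueProd A A' B χ χ₂)) from by
        rw [hsq]; rfl]
      exact hleft
    have hbm : Function.Bijective
        ((toLeft A A' B V W χ).prodMap (toLeft A A' B V₂ W₂ χ₂)) :=
      ((Function.Bijective.of_comp_iff _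
        ((LinearEquiv.baseChange R' A' _ _ E).trans
          (prodBaseChange R' A' M₁ M₂)).bijective).mp hb)
    have := Function.Bijective.of_prodMap (f := ⇑(toLeft A A' B V W χ))
      (g := ⇑(toLeft A A' B V₂ W₂ χ₂)) (by rwa [← LinearMap.coe_prodMap]) 0 0
    exact this.1
  · have hsq : toRight A A' B (V × V₂) (W × W₂) (glueProd A A' B χ χ₂) =
        ((toRight A A' B V W χ).prodMap (toRight A A' B V₂ W₂ χ₂)).comp
          ((LinearEquiv.baseChange R' B _ _ E).trans
            (prodBaseChange R' B M₁ M₂)).toLinearMap := by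
      apply LinearMap.ext_tensor
      intro a p
      simp only [LinearMap.comp_apply, LinearEquiv.coe_coe, LinearEquiv.trans_apply,
        LinearEquiv.baseChange, TensorProduct.AlgebraTensorModule.congr_tmul,
        LinearEquiv.refl_apply, prodBaseChange_tmul', LinearMap.prodMap_apply, toRight_tmul]
      rfl
    have hb : Function.Bijective
        (((toRight A A' B V W χ).prodMap (toRight A A' B V₂ W₂ χ₂)) ∘
          ((LinearEquiv.baseChange R' B _ _ E).trans (prodBaseChange R' B M₁ M₂))) := by
      rw [show ((toRight A A' B V W χ).prodMap (toRight A A' B V₂ W₂ χ₂)) ∘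
          ⇑((LinearEquiv.baseChange R' B _ _ E).trans (prodBaseChange R' B M₁ M₂)) =
          ⇑(toRight A A' B (V × V₂) (W × W₂) (glueProd A A' B χ χ₂)) from by
        rw [hsq]; rfl]
      exact hright
    have hbm : Function.Bijective
        ((toRight A A' B V W χ).prodMap (toRight A A' B V₂ W₂ χ₂)) :=
      ((Function.Bijective.of_comp_iff _
        ((LinearEquiv.baseChange R' B _ _ E).trans
          (prodBaseChange R' B M₁ M₂)).bijective).mp hb)
    have := Function.Bijective.of_prodMap (f := ⇑(toRight A A' B V W χ))
      (g := ⇑(toRight A A' B V₂ W₂ χ₂)) (by rwa [← LinearMap.coe_prodMap]) 0 0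
    exact this.1

theorem good_of_basis {ι : Type*} [Fintype ι] [DecidableEq ι]
    (b₁ : Module.Basis ι A' V) (b₂ : Module.Basis ι B W)
    (χ : (A ⊗[A'] V) ≃ₗ[A] (A ⊗[B] W)) (u : V ≃ₗ[A'] V)
    (H : ∀ v : V, χ ((1:A) ⊗ₜ[A'] u v)
        = (b₂.baseChange A).equivFun.symm (basisCoords (T := A) b₁ v)) :
    Good A A' B χ := by
  classical
  have hmemiff : ∀ (x : V) (y : W), ((x, y) ∈ pullbackModule A A' B V W χ) ↔
      basisCoords (T := A) b₁ (u.symm x) = basisCoords (T := A) b₂ y := by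
    intro x y
    rw [mem_pullback]
    constructor
    · intro h
      have h1 := H (u.symm x)
      rw [u.apply_symm_apply, h] at h1
      have h2 := congrArg (b₂.baseChange A).equivFun h1
      rw [LinearEquiv.apply_symm_apply, equivFun_baseChange_one_tmul] at h2
      exact h2.symm
    · intro h
      have h1 := H (u.symm x)
      rw [u.apply_symm_apply] at h1
      rw [h1, h, equivFun_baseChange_symm_coords]
  set R' := pullbackRing A A' B with hR'
  have hmem : ∀ z : ι → R',
      ((u (∑ i, ((z i : A' × B)).1 • b₁ i), ∑ i, ((z i : A' × B)).2 • b₂ i) : V × W)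
        ∈ pullbackModule A A' B V W χ := by
    intro z
    rw [hmemiff, u.symm_apply_apply]
    funext i
    rw [basisCoords_apply, basisCoords_apply, Module.Basis.repr_sum_self, Module.Basis.repr_sum_self]
    exact (z i).2
  let E : (ι → R') ≃ₗ[R'] pullbackModule A A' B V W χ := {
    toFun := fun z => ⟨_, hmem z⟩
    map_add' := fun z z' => by
      apply Subtype.ext
      have e1 : ∀ i, (((z + z') i : A' × B)).1 = ((z i : A' × B)).1 + ((z' i : A' × B)).1 :=
        fun i => rfl
      have e2 : ∀ i, (((z + z') i : A' × B)).2 = ((z i : A' × B)).2 + ((z' i : A' × B)).2 :=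
        fun i => rfl
      show (u _, _) = (_, _)
      simp only [e1, e2, add_smul, Finset.sum_add_distrib, map_add]
      try rfl
    map_smul' := fun c z => by
      apply Subtype.ext
      have e1 : ∀ i, (((c • z) i : A' × B)).1 = (c : A' × B).1 * ((z i : A' × B)).1 :=
        fun i => rfl
      have e2 : ∀ i, (((c • z) i : A' × B)).2 = (c : A' × B).2 * ((z i : A' × B)).2 :=
        fun i => rfl
      show (u _, _) = (_, _)
      simp only [e1, e2, mul_smul, ← Finset.smul_sum, map_smul]
      try rfl
    invFun := fun p => fun i =>
      ⟨(b₁.repr (u.symm (p : V × W).1) i, b₂.repr (p : V × W).2 i), by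
        have hp := (hmemiff (p : V × W).1 (p : V × W).2).mp p.2
        have h3 := congrFun hp i
        rw [basisCoords_apply, basisCoords_apply] at h3
        exact h3⟩
    left_inv := fun z => by
      funext i
      apply Subtype.ext
      apply Prod.ext
      · show b₁.repr (u.symm (u _)) i = _
        rw [u.symm_apply_apply, Module.Basis.repr_sum_self]
      · show b₂.repr _ i = _
        rw [Module.Basis.repr_sum_self]
    right_inv := fun p => by
      apply Subtype.ext
      apply Prod.ext
      · show u (∑ i, b₁.repr (u.symm (p : V × W).1) i • b₁ i) = (p : V × W).1
        rw [Module.Basis.sum_repr, u.apply_symm_apply]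
      · show (∑ i, b₂.repr (p : V × W).2 i • b₂ i) = (p : V × W).2
        rw [Module.Basis.sum_repr] }
  have hsingle1 : ∀ i : ι, (∑ j, (((Pi.basisFun R' ι i) j : A' × B)).1 • b₁ j) = b₁ i := by
    intro i
    rw [Finset.sum_eq_single i]
    · simp [Pi.basisFun_apply]
    · intro j _ hj
      rw [Pi.basisFun_apply, Pi.single_eq_of_ne hj]
      simp
    · intro hi
      exact absurd (Finset.mem_univ i) hi
  have hsingle2 : ∀ i : ι, (∑ j, (((Pi.basisFun R' ι i) j : A' × B)).2 • b₂ j) = b₂ i := by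
    intro i
    rw [Finset.sum_eq_single i]
    · simp [Pi.basisFun_apply]
    · intro j _ hj
      rw [Pi.basisFun_apply, Pi.single_eq_of_ne hj]
      simp
    · intro hi
      exact absurd (Finset.mem_univ i) hi
  refine ⟨Module.Finite.equiv E, Module.Projective.of_equiv E, ?_, ?_⟩
  · let bR := (Pi.basisFun R' ι).baseChange A'
    have hsq : (toLeft A A' B V W χ).comp
        (LinearEquiv.baseChange R' A' _ _ E).toLinearMap
        = (bR.equiv (b₁.map u) (Equiv.refl ι)).toLinearMap := by
      refine Module.Basis.ext bR fun i => ?_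
      have hR : (bR.equiv (b₁.map u) (Equiv.refl ι)).toLinearMap (bR i) = u (b₁ i) := by
        simp [Module.Basis.equiv_apply]
      rw [hR, Module.Basis.baseChange_apply]
      simp only [LinearMap.comp_apply, LinearEquiv.coe_coe, LinearEquiv.baseChange,
        TensorProduct.AlgebraTensorModule.congr_tmul, LinearEquiv.refl_apply]
      rw [toLeft_tmul]
      show (1 : A') • (u (∑ j, (((Pi.basisFun R' ι i) j : A' × B)).1 • b₁ j)) = u (b₁ i)
      rw [one_smul, hsingle1]
    have hfun : ⇑(toLeft A A' B V W χ) =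
        ⇑(bR.equiv (b₁.map u) (Equiv.refl ι)) ∘
          ⇑(LinearEquiv.baseChange R' A' _ _ E).symm := by
      funext x
      have h4 := LinearMap.congr_fun hsq ((LinearEquiv.baseChange R' A' _ _ E).symm x)
      rw [LinearMap.comp_apply, LinearEquiv.coe_coe, LinearEquiv.apply_symm_apply] at h4
      simpa using h4
    rw [hfun]
    exact (bR.equiv (b₁.map u) (Equiv.refl ι)).bijective.comp
      (LinearEquiv.baseChange R' A' _ _ E).symm.bijective
  · let bR := (Pi.basisFun R' ι).baseChange B
    have hsq : (toRight A A' B V W χ).comp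
        (LinearEquiv.baseChange R' B _ _ E).toLinearMap
        = (bR.equiv b₂ (Equiv.refl ι)).toLinearMap := by
      refine Module.Basis.ext bR fun i => ?_
      have hR : (bR.equiv b₂ (Equiv.refl ι)).toLinearMap (bR i) = b₂ i := by
        simp [Module.Basis.equiv_apply]
      rw [hR, Module.Basis.baseChange_apply]
      simp only [LinearMap.comp_apply, LinearEquiv.coe_coe, LinearEquiv.baseChange,
        TensorProduct.AlgebraTensorModule.congr_tmul, LinearEquiv.refl_apply]
      rw [toRight_tmul]
      show (1 : B) • (∑ j, (((Pi.basisFun R' ι i) j : A' × B)).2 • b₂ j) = b₂ i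
      rw [one_smul, hsingle2]
    have hfun : ⇑(toRight A A' B V W χ) =
        ⇑(bR.equiv b₂ (Equiv.refl ι)) ∘
          ⇑(LinearEquiv.baseChange R' B _ _ E).symm := by
      funext x
      have h4 := LinearMap.congr_fun hsq ((LinearEquiv.baseChange R' B _ _ E).symm x)
      rw [LinearMap.comp_apply, LinearEquiv.coe_coe, LinearEquiv.apply_symm_apply] at h4
      simpa using h4
    rw [hfun]
    exact (bR.equiv b₂ (Equiv.refl ι)).bijective.comp
      (LinearEquiv.baseChange R' B _ _ E).symm.bijective

/-- Gluing data between finite free modules is good. -/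
theorem good_of_finite_basis (hsurj : Function.Surjective (algebraMap A' A))
    {ι : Type*} [Fintype ι] [DecidableEq ι]
    (b₁ : Module.Basis ι A' V) (b₂ : Module.Basis ι B W)
    (χ : (A ⊗[A'] V) ≃ₗ[A] (A ⊗[B] W)) : Good A A' B χ := by
  classical
  obtain ⟨L, hL⟩ := exists_diag_lift hsurj b₁
    ((b₁.baseChange A).equivFun.symm ≪≫ₗ χ ≪≫ₗ (b₂.baseChange A).equivFun)
  refine good_prod_left
    (χ₂ := (b₁.baseChange A).equivFun ≪≫ₗ
      ((b₁.baseChange A).equivFun.symm ≪≫ₗ χ ≪≫ₗ (b₂.baseChange A).equivFun).symm ≪≫ₗ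
      (b₂.baseChange A).equivFun.symm) ?_
  refine good_of_basis (b₁.prod b₁) (b₂.prod b₂) _ L ?_
  intro X
  rw [LinearEquiv.eq_symm_apply]
  rw [show ((1:A) ⊗ₜ[A'] (L X)) = ((1:A) ⊗ₜ[A'] (((L X).1, (L X).2) : V × V)) from rfl]
  rw [glueProd_one_tmul, prod_equivFun_pbc_symm, basisCoords_prod]
  have e1 : (b₂.baseChange A).equivFun (χ ((1:A) ⊗ₜ[A'] (L X).1))
      = basisCoords (T := A) b₁ X.1 := by
    have h0 : ∀ v : V, (b₂.baseChange A).equivFun (χ ((1:A) ⊗ₜ[A'] v))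
        = ((b₁.baseChange A).equivFun.symm ≪≫ₗ χ ≪≫ₗ (b₂.baseChange A).equivFun)
            (basisCoords (T := A) b₁ v) := by
      intro v
      rw [show ((b₁.baseChange A).equivFun.symm ≪≫ₗ χ ≪≫ₗ (b₂.baseChange A).equivFun)
          (basisCoords (T := A) b₁ v)
          = (b₂.baseChange A).equivFun
              (χ ((b₁.baseChange A).equivFun.symm (basisCoords (T := A) b₁ v))) from rfl]
      rw [equivFun_baseChange_symm_coords]
    rw [h0, (hL X).1, LinearEquiv.apply_symm_apply]
  have e2 : (b₂.baseChange A).equivFun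
      (((b₁.baseChange A).equivFun ≪≫ₗ
        ((b₁.baseChange A).equivFun.symm ≪≫ₗ χ ≪≫ₗ (b₂.baseChange A).equivFun).symm ≪≫ₗ
        (b₂.baseChange A).equivFun.symm) ((1:A) ⊗ₜ[A'] (L X).2))
      = basisCoords (T := A) b₁ X.2 := by
    have h0 : ∀ v : V, (b₂.baseChange A).equivFun
        (((b₁.baseChange A).equivFun ≪≫ₗ
          ((b₁.baseChange A).equivFun.symm ≪≫ₗ χ ≪≫ₗ (b₂.baseChange A).equivFun).symm ≪≫ₗ
          (b₂.baseChange A).equivFun.symm) ((1:A) ⊗ₜ[A'] v))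
        = ((b₁.baseChange A).equivFun.symm ≪≫ₗ χ ≪≫ₗ (b₂.baseChange A).equivFun).symm
            (basisCoords (T := A) b₁ v) := by
      intro v
      rw [show (((b₁.baseChange A).equivFun ≪≫ₗ
          ((b₁.baseChange A).equivFun.symm ≪≫ₗ χ ≪≫ₗ (b₂.baseChange A).equivFun).symm ≪≫ₗ
          (b₂.baseChange A).equivFun.symm) ((1:A) ⊗ₜ[A'] v))
          = (b₂.baseChange A).equivFun.symm
              (((b₁.baseChange A).equivFun.symm ≪≫ₗ χ ≪≫ₗ (b₂.baseChange A).equivFun).symm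
                ((b₁.baseChange A).equivFun ((1:A) ⊗ₜ[A'] v))) from rfl]
      rw [LinearEquiv.apply_symm_apply, equivFun_baseChange_one_tmul]
    rw [h0, (hL X).2, LinearEquiv.symm_apply_apply]
  rw [e1, e2]

end Statement4Aux


/-- if `A' → A` is surjective, `P'` is finitely generated
projective over `A'` and `P''` is finitely generated projective over `B`, then
the fibre product `P'''` is finitely generated projective over
`B' = A' ×_A B`, the natural maps `A' ⊗[B'] P''' → P'` and `B ⊗[B'] P''' → P''`
(induced by the coordinate projections) are isomorphisms, and the two induced
identifications of `A ⊗[B'] P'''` with `A ⊗[A'] P'` and with `A ⊗[B] P''`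
(given on generators by `a ⊗ p ↦ a ⊗ p.1` and `a ⊗ p ↦ a ⊗ p.2`) are
compatible with `φ`. -/
theorem pullbackModule_finite_projective_baseChange
    (hsurj : Function.Surjective (algebraMap A' A))
    [Module.Finite A' P'] [Module.Projective A' P']
    [Module.Finite B P''] [Module.Projective B P''] :
    Module.Finite (pullbackRing A A' B) (pullbackModule A A' B P' P'' φ) ∧
    Module.Projective (pullbackRing A A' B) (pullbackModule A A' B P' P'' φ) ∧
    Function.Bijective (toLeft A A' B P' P'' φ) ∧
    Function.Bijective (toRight A A' B P' P'' φ) ∧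
    (∀ (a : A) (p : pullbackModule A A' B P' P'' φ),
      φ (a ⊗ₜ[A'] ((p : P' × P'').1)) = a ⊗ₜ[B] ((p : P' × P'').2)) := by
  obtain ⟨mq, Q₁, ⟨e₁⟩⟩ := exists_complement (S := A') P'
  obtain ⟨nq, Q₂, ⟨e₂⟩⟩ := exists_complement (S := B) P''
  let g : (A ⊗[A'] (↥Q₁ × (Fin nq → A'))) ≃ₗ[A] (A ⊗[B] (↥Q₂ × (Fin mq → B))) :=
    prodBaseChange A' A ↥Q₁ (Fin nq → A') ≪≫ₗ
    (LinearEquiv.refl A (A ⊗[A'] ↥Q₁)).prodCongr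
      (((Pi.basisFun A' (Fin nq)).baseChange A).equivFun ≪≫ₗ
        ((Pi.basisFun B (Fin nq)).baseChange A).equivFun.symm ≪≫ₗ
        LinearEquiv.baseChange B A _ _ e₂.symm ≪≫ₗ
        prodBaseChange B A P'' ↥Q₂ ≪≫ₗ
        (φ.symm.prodCongr (LinearEquiv.refl A (A ⊗[B] ↥Q₂)))) ≪≫ₗ
    (LinearEquiv.prodAssoc A (A ⊗[A'] ↥Q₁) (A ⊗[A'] P') (A ⊗[B] ↥Q₂)).symm ≪≫ₗ
    ((LinearEquiv.prodComm A (A ⊗[A'] ↥Q₁) (A ⊗[A'] P')).prodCongr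
      (LinearEquiv.refl A (A ⊗[B] ↥Q₂))) ≪≫ₗ
    (((prodBaseChange A' A P' ↥Q₁).symm ≪≫ₗ
      LinearEquiv.baseChange A' A _ _ e₁ ≪≫ₗ
      ((Pi.basisFun A' (Fin mq)).baseChange A).equivFun ≪≫ₗ
      ((Pi.basisFun B (Fin mq)).baseChange A).equivFun.symm).prodCongr
        (LinearEquiv.refl A (A ⊗[B] ↥Q₂))) ≪≫ₗ
    LinearEquiv.prodComm A (A ⊗[B] (Fin mq → B)) (A ⊗[B] ↥Q₂) ≪≫ₗ
    (prodBaseChange B A ↥Q₂ (Fin mq → B)).symm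
  let bV : Module.Basis (Fin mq ⊕ Fin nq) A' (P' × (↥Q₁ × (Fin nq → A'))) :=
    (((Pi.basisFun A' (Fin mq)).map e₁.symm).prod (Pi.basisFun A' (Fin nq))).map
      (LinearEquiv.prodAssoc A' P' ↥Q₁ (Fin nq → A'))
  let bW : Module.Basis (Fin mq ⊕ Fin nq) B (P'' × (↥Q₂ × (Fin mq → B))) :=
    ((((Pi.basisFun B (Fin nq)).map e₂.symm).prod (Pi.basisFun B (Fin mq))).map
      (LinearEquiv.prodAssoc B P'' ↥Q₂ (Fin mq → B))).reindex (Equiv.sumComm (Fin nq) (Fin mq))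
  have hgood : Good A A' B φ :=
    good_prod_left (good_of_finite_basis hsurj bV bW (glueProd A A' B φ g))
  refine ⟨hgood.1, hgood.2.1, hgood.2.2.1, hgood.2.2.2, ?_⟩
  intro a p
  have hp : φ ((1:A) ⊗ₜ[A'] (p : P' × P'').1) = (1:A) ⊗ₜ[B] (p : P' × P'').2 := p.2
  have h1 : (a : A) ⊗ₜ[A'] (p : P' × P'').1 = a • ((1:A) ⊗ₜ[A'] (p : P' × P'').1) := by
    rw [smul_tmul', smul_eq_mul, mul_one]
  have h2 : (a : A) ⊗ₜ[B] (p : P' × P'').2 = a • ((1:A) ⊗ₜ[B] (p : P' × P'').2) := by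
    rw [smul_tmul', smul_eq_mul, mul_one]
  rw [h1, h2, map_smul, hp]


end
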